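/- Let M^R = ⊕_{p ∈ ℙ¹(K)} ⊕_{i=1}^{m^p} R_{p,b^p_i} and N^R = ⊕_{p ∈ ℙ¹(K)} ⊕_{j=1}^{n^p} R_{p,e^p_j} be regular Kronecker representations over an algebraically closed field K, with b^p_1 ≥ ... ≥ b^p_{m^p} and e^p_1 ≥ ... ≥ e^p_{n^p} for each p. Then N^R is a subrepresentation of M^R if and only if for every p ∈ ℙ¹(K): m^p ≥ n^p and b^p_i ≥ e^p_i for all 1 ≤ i ≤ n^p. -/

import Mathlib

open Matrix

/-- The map `α` of the regular Kronecker representation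
`⊕_{k} ⊕_{i=1}^{m k} R_{pts k, b k i}`, where `pts k ∈ ℙ¹(K) = Option K`
(`none` is the point `∞`): blockwise `I` for finite points and the nilpotent
Jordan block `J` for `∞`. -/
def RsumA (K : Type*) [Field K] (s : ℕ) (pts : Fin s → Option K)
    (m : Fin s → ℕ) (b : (k : Fin s) → ℕ → ℕ) :
    Matrix (Σ k : Fin s, Σ i : Fin (m k), Fin (b k (i.1 + 1)))
      (Σ k : Fin s, Σ i : Fin (m k), Fin (b k (i.1 + 1))) K :=
  fun x y =>
    if x.1 = y.1 ∧ (x.2.1 : ℕ) = (y.2.1 : ℕ) then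
      (match pts x.1 with
        | some _ => if (x.2.2 : ℕ) = (y.2.2 : ℕ) then 1 else 0
        | none => if (y.2.2 : ℕ) = (x.2.2 : ℕ) + 1 then 1 else 0)
    else 0

/-- The map `β` of `⊕_{k} ⊕_{i} R_{pts k, b k i}`: blockwise `p·I + J` for the finite
point `p` and `I` for `∞`. -/
def RsumB (K : Type*) [Field K] (s : ℕ) (pts : Fin s → Option K)
    (m : Fin s → ℕ) (b : (k : Fin s) → ℕ → ℕ) :
    Matrix (Σ k : Fin s, Σ i : Fin (m k), Fin (b k (i.1 + 1)))
      (Σ k : Fin s, Σ i : Fin (m k), Fin (b k (i.1 + 1))) K :=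
  fun x y =>
    if x.1 = y.1 ∧ (x.2.1 : ℕ) = (y.2.1 : ℕ) then
      (match pts x.1 with
        | some p => (if (x.2.2 : ℕ) = (y.2.2 : ℕ) then p else 0) +
            (if (y.2.2 : ℕ) = (x.2.2 : ℕ) + 1 then 1 else 0)
        | none => if (x.2.2 : ℕ) = (y.2.2 : ℕ) then 1 else 0)
    else 0

set_option linter.unusedSectionVars false
set_option maxHeartbeats 1000000

namespace RegKron

variable {K : Type*} [Field K] {s : ℕ}

/-- Index type of a direct sum of blocks of sizes `b k (i+1)`. -/
abbrev Ind (m : Fin s → ℕ) (b : (k : Fin s) → ℕ → ℕ) :=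
  (Σ k : Fin s, Σ i : Fin (m k), Fin (b k (i.1 + 1)))

/-- Block-diagonal, upper-triangular Toeplitz matrix: on each sub-block the
matrix `∑ t, c k t • J^t`. -/
def Pm (m : Fin s → ℕ) (b : (k : Fin s) → ℕ → ℕ) (c : Fin s → ℕ → K) :
    Matrix (Ind m b) (Ind m b) K :=
  fun x y =>
    if x.1 = y.1 ∧ (x.2.1 : ℕ) = (y.2.1 : ℕ) ∧ (x.2.2 : ℕ) ≤ (y.2.2 : ℕ) then
      c x.1 ((y.2.2 : ℕ) - (x.2.2 : ℕ))
    else 0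

variable {m : Fin s → ℕ} {b : (k : Fin s) → ℕ → ℕ}

lemma sum_ind (F : Ind m b → K) :
    ∑ y : Ind m b, F y = ∑ k : Fin s, ∑ i : Fin (m k), ∑ t : Fin (b k (i.1+1)),
      F ⟨k, i, t⟩ := by
  rw [← Finset.univ_sigma_univ, Finset.sum_sigma]
  refine Finset.sum_congr rfl fun k _ => ?_
  rw [← Finset.univ_sigma_univ, Finset.sum_sigma]

lemma Pm_mulVec (c : Fin s → ℕ → K) (w : Ind m b → K) (x : Ind m b) :
    (Pm m b c).mulVec w x
      = ∑ t : Fin (b x.1 (x.2.1.1 + 1)),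
          if (x.2.2 : ℕ) ≤ (t : ℕ) then c x.1 ((t : ℕ) - (x.2.2 : ℕ)) * w ⟨x.1, x.2.1, t⟩
          else 0 := by
  obtain ⟨k, i, u⟩ := x
  rw [mulVec, dotProduct, sum_ind (fun y => Pm m b c ⟨k,i,u⟩ y * w y)]
  rw [Finset.sum_eq_single k]
  · rw [Finset.sum_eq_single i]
    · refine Finset.sum_congr rfl fun t _ => ?_
      simp only [Pm]
      by_cases h : (u : ℕ) ≤ (t : ℕ) <;> simp [h]
    · intro j _ hj
      apply Finset.sum_eq_zero
      intro t _
      simp only [Pm]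
      rw [if_neg, zero_mul]
      rintro ⟨-, h2, -⟩
      exact hj (Fin.ext h2.symm)
    · simp
  · intro k' _ hk'
    apply Finset.sum_eq_zero; intro j _; apply Finset.sum_eq_zero; intro t _
    simp only [Pm]
    rw [if_neg, zero_mul]
    rintro ⟨h1, -, -⟩
    exact hk' h1.symm
  · simp


def conv (c c' : Fin s → ℕ → K) : Fin s → ℕ → K :=
  fun k d => ∑ e ∈ Finset.range (d+1), c k e * c' k (d - e)

lemma sum_toeplitz (c c' : ℕ → K) (u v bb : ℕ) (huv : u ≤ v) (hvb : v < bb) :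
    ∑ t ∈ Finset.range bb,
      (if u ≤ t then c (t-u) else 0) * (if t ≤ v then c' (v-t) else 0)
    = ∑ e ∈ Finset.range (v - u + 1), c e * c' (v - u - e) := by
  rw [← Finset.sum_subset (s₁ := Finset.Icc u v)
      (fun x hx => by rw [Finset.mem_range]; rw [Finset.mem_Icc] at hx; omega)
      (fun x _ hx => by
        rw [Finset.mem_Icc] at hx
        rcases Nat.lt_or_ge x u with h | h
        · have hn : ¬ u ≤ x := by omega
          rw [if_neg hn, zero_mul]
        · have hn : ¬ x ≤ v := by omega
          rw [if_neg hn, mul_zero])]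
  refine Finset.sum_bij' (fun t _ => t - u) (fun e _ => u + e) ?_ ?_ ?_ ?_ ?_ <;>
    intro a ha <;> (try dsimp only) <;>
    simp only [Finset.mem_Icc, Finset.mem_range] at ha ⊢
  · omega
  · omega
  · omega
  · omega
  · rw [if_pos (by omega), if_pos (by omega)]
    congr 2
    omega


lemma Pm_apply_mk (c : Fin s → ℕ → K) {k : Fin s} (i : Fin (m k))
    (u t : Fin (b k (i.1+1))) :
    Pm m b c ⟨k,i,u⟩ ⟨k,i,t⟩ = if (u:ℕ) ≤ (t:ℕ) then c k ((t:ℕ)-(u:ℕ)) else 0 := by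
  simp [Pm]

lemma Pm_mul (c c' : Fin s → ℕ → K) :
    Pm m b c * Pm m b c' = Pm m b (conv c c') := by
  ext x y
  rw [mul_apply, sum_ind (fun z => Pm m b c x z * Pm m b c' z y)]
  obtain ⟨k, i, u⟩ := x
  obtain ⟨k', j, v⟩ := y
  rw [Finset.sum_eq_single k]
  · rw [Finset.sum_eq_single i]
    · by_cases hxy : k = k' ∧ (i : ℕ) = (j : ℕ) ∧ (u : ℕ) ≤ (v : ℕ)
      · obtain ⟨h1, h2, h3⟩ := hxy
        subst h1
        have hj : j = i := Fin.ext h2.symm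
        subst hj
        have hterm : ∀ t : Fin (b k (j.1+1)),
            Pm m b c ⟨k,j,u⟩ ⟨k,j,t⟩ * Pm m b c' ⟨k,j,t⟩ ⟨k,j,v⟩
            = (fun tn => (if (u:ℕ) ≤ tn then c k (tn - (u:ℕ)) else 0) *
              (if tn ≤ (v:ℕ) then c' k ((v:ℕ) - tn) else 0)) (t : ℕ) := by
          intro t
          dsimp only
          rw [Pm_apply_mk, Pm_apply_mk]
        rw [Finset.sum_congr rfl (fun t _ => hterm t),
          Fin.sum_univ_eq_sum_range
          (fun tn => (if (u:ℕ) ≤ tn then c k (tn - (u:ℕ)) else 0) *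
              (if tn ≤ (v:ℕ) then c' k ((v:ℕ) - tn) else 0)),
          sum_toeplitz _ _ _ _ _ h3 v.2]
        rw [Pm_apply_mk, if_pos h3]
        rfl
      · rw [Finset.sum_eq_zero, Pm, if_neg]
        · exact fun h => hxy h
        · intro t _
          rw [Pm_apply_mk]
          rcases Classical.em (k = k' ∧ (i:ℕ) = (j:ℕ)) with ⟨ha, hb⟩ | hno
          · have hv : ¬((u:ℕ) ≤ (v:ℕ)) := fun hc => hxy ⟨ha, hb, hc⟩
            rcases Nat.lt_or_ge (v : ℕ) (t : ℕ) with h | h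
            · simp only [Pm]
              rw [if_neg (show ¬(k = k' ∧ (i:ℕ) = (j:ℕ) ∧ (t:ℕ) ≤ (v:ℕ)) by
                  rintro ⟨-, -, hc⟩; omega), mul_zero]
            · rw [if_neg (show ¬((u:ℕ) ≤ (t:ℕ)) by omega), zero_mul]
          · simp only [Pm]
            rw [if_neg (show ¬(k = k' ∧ (i:ℕ) = (j:ℕ) ∧ (t:ℕ) ≤ (v:ℕ)) by
                rintro ⟨ha, hb, -⟩; exact hno ⟨ha, hb⟩), mul_zero]
    · intro j' _ hj'
      apply Finset.sum_eq_zero; intro t _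
      simp only [Pm]
      rw [if_neg (by rintro ⟨-, h2, -⟩; exact hj' (Fin.ext h2.symm)), zero_mul]
    · simp
  · intro k'' _ hk''
    apply Finset.sum_eq_zero; intro j' _; apply Finset.sum_eq_zero; intro t _
    simp only [Pm]
    rw [if_neg (by rintro ⟨h1, -, -⟩; exact hk'' h1.symm), zero_mul]
  · simp

lemma conv_comm (c c' : Fin s → ℕ → K) : conv c c' = conv c' c := by
  funext k d
  simp only [conv]
  refine Finset.sum_bij' (fun e _ => d - e) (fun e _ => d - e) ?_ ?_ ?_ ?_ ?_ <;>
    intro a ha <;> (try dsimp only) <;>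
    simp only [Finset.mem_range] at ha ⊢
  · omega
  · omega
  · omega
  · omega
  · rw [mul_comm]; congr 2; omega

lemma Pm_commute (c c' : Fin s → ℕ → K) :
    Pm m b c * Pm m b c' = Pm m b c' * Pm m b c := by
  rw [Pm_mul, Pm_mul, conv_comm]

def cone : Fin s → ℕ → K := fun _ d => if d = 0 then 1 else 0

lemma Pm_one : Pm m b (cone (K := K)) = 1 := by
  ext ⟨k, i, u⟩ ⟨k', j, v⟩
  simp only [cone, Matrix.one_apply]
  by_cases hk : k = k'
  · subst hk
    by_cases hij : i = j
    · subst hij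
      rw [Pm_apply_mk]
      by_cases huv : u = v
      · subst huv
        rw [if_pos (le_refl _), Nat.sub_self]
        simp [cone]
      · have hvv : (u : ℕ) ≠ (v : ℕ) := fun h => huv (Fin.ext h)
        rw [if_neg (show ¬((⟨k,i,u⟩ : Ind m b) = ⟨k,i,v⟩) from
          fun hh => huv (by simpa using hh))]
        by_cases h1 : (u:ℕ) ≤ (v:ℕ)
        · rw [if_pos h1]
          simp only [cone]
          rw [if_neg (show ¬((v:ℕ)-(u:ℕ) = 0) by omega)]
        · rw [if_neg h1]
    · simp only [Pm]
      rw [if_neg (show ¬((⟨k,i,u⟩ : Ind m b) = ⟨k,j,v⟩) from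
          fun hh => hij (Fin.ext (congrArg (fun z : Ind m b => ((z.2.1 : ℕ))) hh))),
        if_neg (by rintro ⟨-, h2, -⟩; exact hij (Fin.ext h2))]
  · simp only [Pm]
    rw [if_neg (by rintro ⟨h1, -⟩; exact hk h1),
      if_neg (by rintro h; exact hk (congrArg Sigma.fst h))]

def cpow (c : Fin s → ℕ → K) : ℕ → Fin s → ℕ → K
  | 0 => cone
  | i+1 => conv (cpow c i) c

lemma Pm_pow (c : Fin s → ℕ → K) (i : ℕ) :
    (Pm m b c) ^ i = Pm m b (cpow c i) := by
  induction i with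
  | zero => rw [pow_zero, cpow, Pm_one]
  | succ i ih => rw [pow_succ, ih, Pm_mul, cpow]


lemma cpow_special {c : Fin s → ℕ → K} {k₀ : Fin s}
    (h0 : c k₀ 0 = 0) (h1 : c k₀ 1 = 1) (h2 : ∀ d, 2 ≤ d → c k₀ d = 0) (i : ℕ) :
    ∀ d, cpow c i k₀ d = if d = i then 1 else 0 := by
  induction i with
  | zero => intro d; rfl
  | succ i ih =>
    intro d
    show conv (cpow c i) c k₀ d = _
    simp only [conv]
    rw [Finset.sum_congr rfl (fun e _ => by rw [ih e])]
    by_cases hd : i ≤ d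
    · rw [Finset.sum_eq_single i]
      · rw [if_pos rfl, one_mul]
        have hcase : d - i = 0 ∨ d - i = 1 ∨ 2 ≤ d - i := by omega
        rcases hcase with h | h | h
        · rw [h, h0, if_neg (by omega)]
        · rw [h, h1, if_pos (by omega)]
        · rw [h2 _ h, if_neg (by omega)]
      · intro e _ he
        rw [if_neg he, zero_mul]
      · intro hni
        exact absurd (Finset.mem_range.mpr (by omega)) hni
    · rw [Finset.sum_eq_zero, if_neg (by omega)]
      intro e he
      rw [Finset.mem_range] at he
      rw [if_neg (by omega), zero_mul]

/-- Coordinate subspace of functions supported on `S`. -/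
def Uo {ι : Type*} (S : Finset ι) : Submodule K (ι → K) where
  carrier := {v | ∀ x ∉ S, v x = 0}
  add_mem' := fun {v} {w} hv hw x hx => by
    simp only [Pi.add_apply, hv x hx, hw x hx, add_zero]
  zero_mem' := fun x _ => rfl
  smul_mem' := fun a {v} hv x hx => by
    simp only [Pi.smul_apply, hv x hx, smul_eq_mul, mul_zero]

lemma mem_Uo {ι : Type*} (S : Finset ι) (v : ι → K) :
    v ∈ Uo S ↔ ∀ x ∉ S, v x = 0 := Iff.rfl

noncomputable def UoEquiv {ι : Type*} [DecidableEq ι] (S : Finset ι) :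
    (Uo (K := K) S) ≃ₗ[K] (↥S → K) where
  toFun := fun v x => v.1 x.1
  map_add' := fun v w => rfl
  map_smul' := fun a v => rfl
  invFun := fun g => ⟨fun x => if h : x ∈ S then g ⟨x, h⟩ else 0,
    fun x hx => dif_neg hx⟩
  left_inv := fun v => by
    apply Subtype.ext
    funext x
    dsimp only
    by_cases h : x ∈ S
    · rw [dif_pos h]
    · rw [dif_neg h, v.2 x h]
  right_inv := fun g => by
    funext x
    simp only []
    rw [dif_pos x.2]

lemma finrank_Uo {ι : Type*} [Fintype ι] [DecidableEq ι] (S : Finset ι) :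
    Module.finrank K (Uo (K := K) S) = S.card := by
  rw [(UoEquiv S).finrank_eq, Module.finrank_fintype_fun_eq_card, Fintype.card_coe]


/-- The index set spanning `ker C ⊓ range C^i`. -/
def SS (m : Fin s → ℕ) (b : (k : Fin s) → ℕ → ℕ) (k₀ : Fin s) (i : ℕ) :
    Finset (Ind m b) :=
  Finset.univ.filter (fun x => x.1 = k₀ ∧ (x.2.2 : ℕ) = 0 ∧ i < b k₀ (x.2.1.1 + 1))

lemma mem_SS {k₀ : Fin s} {i : ℕ} {x : Ind m b} :
    x ∈ SS m b k₀ i ↔ x.1 = k₀ ∧ (x.2.2 : ℕ) = 0 ∧ i < b k₀ (x.2.1.1 + 1) := by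
  simp [SS]

lemma card_SS (k₀ : Fin s) (i : ℕ) :
    (SS m b k₀ i).card
      = (Finset.univ.filter (fun i' : Fin (m k₀) => i < b k₀ (i'.1 + 1))).card := by
  refine Finset.card_bij' (fun x hx => ⟨x.2.1.1, by
      rw [mem_SS] at hx; exact hx.1 ▸ x.2.1.2⟩)
    (fun i' hi' => ⟨k₀, ⟨⟨i'.1, i'.2⟩, ⟨0,
      lt_of_le_of_lt (Nat.zero_le i) (Finset.mem_filter.mp hi').2⟩⟩⟩) ?_ ?_ ?_ ?_
  · intro x hx
    rw [mem_SS] at hx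
    rw [Finset.mem_filter]
    refine ⟨Finset.mem_univ _, ?_⟩
    exact hx.2.2
  · intro i' hi'
    rw [mem_SS]
    exact ⟨rfl, rfl, by rw [Finset.mem_filter] at hi'; exact hi'.2⟩
  · intro x hx
    rw [mem_SS] at hx
    obtain ⟨k', i', t⟩ := x
    obtain ⟨h1, h2, h3⟩ := hx
    dsimp only at h1 h2 h3 ⊢
    subst h1
    refine Sigma.ext rfl (heq_of_eq (Sigma.ext (Fin.ext rfl) ?_))
    exact (Fin.heq_ext_iff (by rfl)).mpr (by dsimp only; omega)
  · intro i' _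
    rfl


section Main
variable {c : Fin s → ℕ → K} {k₀ : Fin s}
  (h0 : c k₀ 0 = 0) (h1 : c k₀ 1 = 1) (h2 : ∀ k d, 2 ≤ d → c k d = 0)
  (hnz : ∀ k, k ≠ k₀ → c k 0 ≠ 0)

include h0 h1 h2 hnz in
lemma ker_inf_range_eq (i : ℕ) :
    LinearMap.ker (Pm m b c).mulVecLin
      ⊓ LinearMap.range (Pm m b (cpow c i)).mulVecLin
    = Uo (SS m b k₀ i) := by
  have hsp := cpow_special h0 h1 (fun d hd => h2 k₀ d hd) i
  ext v
  simp only [Submodule.mem_inf, LinearMap.mem_ker, LinearMap.mem_range, mem_Uo,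
    mulVecLin_apply]
  constructor
  · rintro ⟨hker, ⟨w, hw⟩⟩ x hx
    have rows : ∀ y : Ind m b, (Pm m b c).mulVec v y = 0 := fun y => congrFun hker y
    -- coordinates in non-special blocks vanish
    have claim1 : ∀ (k' : Fin s), k' ≠ k₀ → ∀ (i' : Fin (m k'))
        (t : Fin (b k' (i'.1+1))), v ⟨k', i', t⟩ = 0 := by
      intro k' hk' i'
      have main : ∀ jj (t : Fin (b k' (i'.1+1))), b k' (i'.1+1) - t.1 ≤ jj →
          v ⟨k', i', t⟩ = 0 := by
        intro jj
        induction jj with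
        | zero => intro t ht; exact absurd ht (by omega)
        | succ jj ih =>
          intro t ht
          have hrow := rows ⟨k', i', t⟩
          rw [Pm_mulVec] at hrow
          rw [Finset.sum_eq_single t] at hrow
          · rw [if_pos (le_refl _), Nat.sub_self] at hrow
            rcases mul_eq_zero.mp hrow with h | h
            · exact absurd h (hnz k' hk')
            · exact h
          · intro t' _ ht'
            by_cases hle : (t : ℕ) ≤ (t' : ℕ)
            · rw [if_pos hle, ih t' (by
                have : (t:ℕ) ≠ (t':ℕ) := fun hh => ht' (Fin.ext hh.symm)
                omega), mul_zero]
            · rw [if_neg hle]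
          · intro h; exact absurd (Finset.mem_univ t) h
      exact fun t => main (b k' (i'.1+1)) t (by omega)
    -- coordinates ≥ 1 in the special block vanish
    have claim2 : ∀ (i' : Fin (m k₀)) (t : Fin (b k₀ (i'.1+1))), 1 ≤ (t : ℕ) →
        v ⟨k₀, i', t⟩ = 0 := by
      intro i' t htpos
      have hrow := rows ⟨k₀, i', ⟨t.1 - 1, by omega⟩⟩
      rw [Pm_mulVec] at hrow
      rw [Finset.sum_eq_single t] at hrow
      · rw [if_pos (by dsimp only; omega)] at hrow
        have : (t : ℕ) - ((t : ℕ) - 1) = 1 := by omega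
        rw [this, h1, one_mul] at hrow
        exact hrow
      · intro t' _ ht'
        by_cases hle : (t:ℕ) - 1 ≤ (t' : ℕ)
        · rw [if_pos hle]
          have hvne : (t' : ℕ) ≠ (t : ℕ) := fun hh => ht' (Fin.ext hh)
          rcases Nat.lt_or_ge (t' : ℕ) (t : ℕ) with hlt | hge
          · have : (t' : ℕ) - ((t:ℕ) - 1) = 0 := by omega
            rw [this, h0, zero_mul]
          · have h2d : 2 ≤ (t' : ℕ) - ((t:ℕ) - 1) := by omega
            rw [h2 k₀ _ h2d, zero_mul]
        · rw [if_neg hle]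
      · intro h; exact absurd (Finset.mem_univ t) h
    -- special block, coordinate 0, short blocks vanish
    obtain ⟨k', i', t⟩ := x
    rw [mem_SS] at hx
    dsimp only at hx
    by_cases hk : k' = k₀
    · subst hk
      by_cases ht0 : (t : ℕ) = 0
      · have hbi : ¬ (i < b k' (i'.1 + 1)) := fun hbi => hx ⟨rfl, ht0, hbi⟩
        have hthis := congrFun hw ⟨k', i', t⟩
        rw [Pm_mulVec] at hthis
        dsimp only at hthis
        rw [Finset.sum_eq_zero] at hthis
        · exact hthis.symm
        · intro t' _
          by_cases hle : (t : ℕ) ≤ (t' : ℕ)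
          · rw [if_pos hle, hsp, if_neg (by omega), zero_mul]
          · rw [if_neg hle]
      · exact claim2 i' t (by omega)
    · exact claim1 k' hk i' t
  · intro hv
    constructor
    · funext x
      rw [Pm_mulVec]
      simp only [Pi.zero_apply]
      apply Finset.sum_eq_zero
      intro t' _
      obtain ⟨k', i', t⟩ := x
      dsimp only
      by_cases hle : (t : ℕ) ≤ (t' : ℕ)
      · rw [if_pos hle]
        by_cases hk : k' = k₀
        · subst hk
          by_cases ht0 : (t' : ℕ) = 0
          · have ht : (t : ℕ) = 0 := by omega
            have : (t' : ℕ) - (t : ℕ) = 0 := by omega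
            rw [this, h0, zero_mul]
          · rw [hv ⟨k', i', t'⟩ (fun hmem => by
              rw [mem_SS] at hmem
              exact ht0 hmem.2.1), mul_zero]
        · rw [hv ⟨k', i', t'⟩ (fun hmem => by
            rw [mem_SS] at hmem
            exact hk hmem.1), mul_zero]
      · rw [if_neg hle]
    · refine ⟨fun y => if h : y.1 = k₀ ∧ (y.2.2 : ℕ) = i then
        v ⟨y.1, y.2.1, ⟨0, lt_of_le_of_lt (Nat.zero_le _) y.2.2.2⟩⟩ else 0, ?_⟩
      funext x
      rw [Pm_mulVec]
      obtain ⟨k', i', t⟩ := x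
      dsimp only
      by_cases hk : k' = k₀
      · subst hk
        by_cases hbi : i < b k' (i'.1 + 1)
        · rw [Finset.sum_eq_single ⟨i, hbi⟩]
          · by_cases ht0 : (t : ℕ) = 0
            · rw [if_pos (show (t:ℕ) ≤ ((⟨i, hbi⟩ : Fin (b k' (i'.1+1))) : ℕ) by
                  dsimp only; omega)]
              rw [hsp, if_pos (by dsimp only; omega), one_mul,
                dif_pos ⟨rfl, rfl⟩]
              exact congrArg v (Sigma.ext rfl (heq_of_eq (Sigma.ext rfl
                (heq_of_eq (Fin.ext (by dsimp only; omega))))))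
            · rw [hv ⟨k', i', t⟩ (fun hmem => by
                rw [mem_SS] at hmem
                exact ht0 hmem.2.1)]
              by_cases hle : (t : ℕ) ≤ i
              · rw [if_pos (show (t:ℕ) ≤ ((⟨i, hbi⟩ : Fin (b k' (i'.1+1))) : ℕ) from hle),
                  hsp, if_neg (by dsimp only; omega), zero_mul]
              · rw [if_neg (show ¬((t:ℕ) ≤ ((⟨i, hbi⟩ : Fin (b k' (i'.1+1))) : ℕ)) from hle)]
          · intro t' _ ht'
            by_cases hle : (t : ℕ) ≤ (t' : ℕ)
            · rw [if_pos hle, dif_neg, mul_zero]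
              rintro ⟨-, hti⟩
              exact ht' (Fin.ext hti)
            · rw [if_neg hle]
          · intro h; exact absurd (Finset.mem_univ _) h
        · rw [Finset.sum_eq_zero, eq_comm]
          · apply hv
            rw [mem_SS]
            rintro ⟨-, -, hlt⟩
            exact hbi hlt
          · intro t' _
            by_cases hle : (t : ℕ) ≤ (t' : ℕ)
            · rw [if_pos hle, dif_neg, mul_zero]
              rintro ⟨-, hti⟩
              omega
            · rw [if_neg hle]
      · rw [Finset.sum_eq_zero, eq_comm]
        · apply hv
          rw [mem_SS]
          rintro ⟨hh, -, -⟩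
          exact hk hh
        · intro t' _
          by_cases hle : (t : ℕ) ≤ (t' : ℕ)
          · rw [if_pos hle, dif_neg, mul_zero]
            rintro ⟨hh, -⟩
            exact hk hh
          · rw [if_neg hle]
end Main

lemma mulVecLin_matrix_pow {ι : Type*} [Fintype ι] [DecidableEq ι]
    (M : Matrix ι ι K) (i : ℕ) :
    (M ^ i).mulVecLin = (M.mulVecLin) ^ i := by
  induction i with
  | zero => rw [pow_zero, pow_zero, Matrix.mulVecLin_one]; rfl
  | succ i ih => rw [pow_succ, pow_succ, Matrix.mulVecLin_mul, ih]; rfl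

lemma finrank_ker_inf_range_le {V W : Type*} [AddCommGroup V] [Module K V]
    [AddCommGroup W] [Module K W] [FiniteDimensional K W]
    (Φ : V →ₗ[K] W) (hΦ : Function.Injective Φ)
    (fM : W →ₗ[K] W) (fN : V →ₗ[K] V)
    (h : ∀ v, fM (Φ v) = Φ (fN v)) (i : ℕ) :
    Module.finrank K (LinearMap.ker fN ⊓ LinearMap.range (fN ^ i) : Submodule K V)
      ≤ Module.finrank K (LinearMap.ker fM ⊓ LinearMap.range (fM ^ i) : Submodule K W) := by
  have hpow : ∀ j v, (fM ^ j) (Φ v) = Φ ((fN ^ j) v) := by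
    intro j
    induction j with
    | zero => intro v; simp
    | succ j ih =>
      intro v
      rw [pow_succ', pow_succ', Module.End.mul_apply, Module.End.mul_apply, ih v, h]
  have hmap : Submodule.map Φ (LinearMap.ker fN ⊓ LinearMap.range (fN ^ i))
      ≤ LinearMap.ker fM ⊓ LinearMap.range (fM ^ i) := by
    rintro x ⟨v, ⟨hker, ⟨w, hw⟩⟩, rfl⟩
    have h0 : fN v = 0 := hker
    refine ⟨?_, ⟨Φ w, ?_⟩⟩
    · show fM (Φ v) = 0
      rw [h v, h0, map_zero]
    · show (fM ^ i) (Φ w) = Φ v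
      rw [hpow i w, hw]
  calc Module.finrank K (LinearMap.ker fN ⊓ LinearMap.range (fN ^ i) : Submodule K V)
      = Module.finrank K
          (Submodule.map Φ (LinearMap.ker fN ⊓ LinearMap.range (fN ^ i))) :=
        (Submodule.equivMapOfInjective Φ hΦ _).finrank_eq
    _ ≤ _ := Submodule.finrank_mono hmap

lemma finrank_ker_inf_range_twist {W : Type*} [AddCommGroup W] [Module K W]
    (f g : W →ₗ[K] W) (hg : Function.Bijective g)
    (hcomm : ∀ v, f (g v) = g (f v)) (i : ℕ) :
    Module.finrank K (LinearMap.ker f ⊓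
        LinearMap.range (((LinearEquiv.ofBijective g hg).symm.toLinearMap ∘ₗ f) ^ i) : Submodule K W)
      = Module.finrank K (LinearMap.ker f ⊓ LinearMap.range (f ^ i) : Submodule K W) := by
  set e := LinearEquiv.ofBijective g hg with he
  have hge : ∀ v, g v = e v := fun v => rfl
  have hfc : ∀ v, f (e.symm v) = e.symm (f v) := by
    intro v
    have h2 : f (e (e.symm v)) = e (f (e.symm v)) := by
      rw [← hge, ← hge]; exact hcomm _
    rw [e.apply_symm_apply] at h2
    calc f (e.symm v) = e.symm (e (f (e.symm v))) := (e.symm_apply_apply _).symm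
    _ = e.symm (f v) := by rw [← h2]
  let Ei : ℕ → (W ≃ₗ[K] W) := fun j => Nat.rec (LinearEquiv.refl K W)
    (fun _ E => E.trans e.symm) j
  have hEi0 : ∀ v, Ei 0 v = v := fun _ => rfl
  have hEisucc : ∀ j v, Ei (j+1) v = e.symm (Ei j v) := fun _ _ => rfl
  have hEisymm0 : ∀ v, (Ei 0).symm v = v := fun _ => rfl
  have hEisymmsucc : ∀ j v, (Ei (j+1)).symm v = (Ei j).symm (e v) := fun _ _ => rfl
  have hfEi : ∀ j v, f (Ei j v) = Ei j (f v) := by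
    intro j
    induction j with
    | zero => intro v; rw [hEi0, hEi0]
    | succ j ih => intro v; rw [hEisucc, hEisucc, hfc, ih]
  have hfEisymm : ∀ j v, f ((Ei j).symm v) = (Ei j).symm (f v) := by
    intro j
    induction j with
    | zero => intro v; rw [hEisymm0, hEisymm0]
    | succ j ih =>
      intro v
      rw [hEisymmsucc, hEisymmsucc, ih, ← hge, hcomm, hge]
  have hpow : ∀ j v, ((e.symm.toLinearMap ∘ₗ f) ^ j) v = Ei j ((f ^ j) v) := by
    intro j
    induction j with
    | zero => intro v; rw [pow_zero, pow_zero]; exact (hEi0 _).symm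
    | succ j ih =>
      intro v
      rw [pow_succ', pow_succ', Module.End.mul_apply, Module.End.mul_apply, ih,
        LinearMap.comp_apply]
      rw [hfEi j ((f ^ j) v)]
      exact (hEisucc j _).symm
  have hrange : LinearMap.range ((e.symm.toLinearMap ∘ₗ f) ^ i)
      = Submodule.map (Ei i).toLinearMap (LinearMap.range (f ^ i)) := by
    ext u
    simp only [LinearMap.mem_range, Submodule.mem_map]
    constructor
    · rintro ⟨w, hw⟩
      refine ⟨(f ^ i) w, ⟨w, rfl⟩, ?_⟩
      show (Ei i) ((f ^ i) w) = u
      rw [← hpow i w]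
      exact hw
    · rintro ⟨z, ⟨w, rfl⟩, hz⟩
      exact ⟨w, by rw [hpow i w]; exact hz⟩
  have hkermap : Submodule.map (Ei i).toLinearMap (LinearMap.ker f) = LinearMap.ker f := by
    ext x
    rw [Submodule.mem_map_equiv]
    constructor
    · intro hx
      have hx' : f ((Ei i).symm x) = 0 := hx
      rw [hfEisymm i x] at hx'
      have := (Ei i).symm.injective (by rw [hx', map_zero] :
        (Ei i).symm (f x) = (Ei i).symm 0)
      exact this
    · intro hx
      have hx' : f x = 0 := hx
      show f ((Ei i).symm x) = 0
      rw [hfEisymm i x, hx', map_zero]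
  have hinf : LinearMap.ker f ⊓ Submodule.map (Ei i).toLinearMap (LinearMap.range (f ^ i))
      = Submodule.map (Ei i).toLinearMap (LinearMap.ker f ⊓ LinearMap.range (f ^ i)) := by
    rw [Submodule.map_inf (Ei i).toLinearMap (Ei i).injective, hkermap]
  rw [hrange, hinf]
  exact LinearEquiv.finrank_map_eq _ _

/-- coefficients of `β - z·α` (for `q = some z`) resp. `α` (for `q = ∞`). -/
def cpt (pts : Fin s → Option K) (q : Option K) : Fin s → ℕ → K :=
  fun k d =>
    match q with
    | some z => (match pts k with
        | some p => if d = 0 then p - z else if d = 1 then 1 else 0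
        | none => if d = 0 then 1 else if d = 1 then -z else 0)
    | none => (match pts k with
        | some _ => if d = 0 then 1 else 0
        | none => if d = 1 then 1 else 0)

lemma Pm_cpt_some (pts : Fin s → Option K) (z : K) :
    Pm m b (cpt pts (some z)) = RsumB K s pts m b - z • RsumA K s pts m b := by
  ext ⟨k, i, u⟩ ⟨k', j, v⟩
  simp only [Pm, cpt, RsumA, RsumB, Matrix.sub_apply, Matrix.smul_apply, smul_eq_mul]
  by_cases hb : k = k' ∧ (i : ℕ) = (j : ℕ)
  · rw [if_pos hb, if_pos hb]
    rcases hp : pts k with _ | p <;> simp only [hp] <;>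
      by_cases huv : (u : ℕ) ≤ (v : ℕ)
    · rw [if_pos ⟨hb.1, hb.2, huv⟩]
      split_ifs <;> first | ring1 | (exfalso; omega)
    · rw [if_neg (fun hh => huv hh.2.2)]
      split_ifs <;> first | ring1 | (exfalso; omega)
    · rw [if_pos ⟨hb.1, hb.2, huv⟩]
      split_ifs <;> first | ring1 | (exfalso; omega)
    · rw [if_neg (fun hh => huv hh.2.2)]
      split_ifs <;> first | ring1 | (exfalso; omega)
  · rw [if_neg (fun hh => hb ⟨hh.1, hh.2.1⟩), if_neg hb, if_neg hb]
    ring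

lemma Pm_cpt_none (pts : Fin s → Option K) :
    Pm m b (cpt pts none) = RsumA K s pts m b := by
  ext ⟨k, i, u⟩ ⟨k', j, v⟩
  simp only [Pm, cpt, RsumA]
  by_cases hb : k = k' ∧ (i : ℕ) = (j : ℕ)
  · rw [if_pos hb]
    rcases hp : pts k with _ | p <;> simp only [hp] <;>
      by_cases huv : (u : ℕ) ≤ (v : ℕ)
    · rw [if_pos ⟨hb.1, hb.2, huv⟩]
      split_ifs <;> first | rfl | (exfalso; omega)
    · rw [if_neg (fun hh => huv hh.2.2)]
      split_ifs <;> first | rfl | (exfalso; omega)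
    · rw [if_pos ⟨hb.1, hb.2, huv⟩]
      split_ifs <;> first | rfl | (exfalso; omega)
    · rw [if_neg (fun hh => huv hh.2.2)]
      split_ifs <;> first | rfl | (exfalso; omega)
  · rw [if_neg (fun hh => hb ⟨hh.1, hh.2.1⟩), if_neg hb]

lemma cpt_deg2 (pts : Fin s → Option K) (q : Option K) :
    ∀ k d, 2 ≤ d → cpt pts q k d = 0 := by
  intro k d hd
  rcases q with _ | z <;> rcases hp : pts k with _ | p <;>
    simp only [cpt, hp] <;> split_ifs <;> first | rfl | (exfalso; omega) | (exfalso; omega)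

lemma cpt_special0 (pts : Fin s → Option K) {q : Option K} {k₀ : Fin s}
    (hk : pts k₀ = q) : cpt pts q k₀ 0 = 0 := by
  rcases q with _ | z <;> simp only [cpt, hk] <;> simp

lemma cpt_special1 (pts : Fin s → Option K) {q : Option K} {k₀ : Fin s}
    (hk : pts k₀ = q) : cpt pts q k₀ 1 = 1 := by
  rcases q with _ | z <;> simp only [cpt, hk] <;> simp

lemma cpt_nz (pts : Fin s → Option K) {q : Option K} {k : Fin s}
    (hk : pts k ≠ q) : cpt pts q k 0 ≠ 0 := by
  intro h0
  rcases hq : q with _ | z <;> rw [hq] at hk h0 <;>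
    rcases hp : pts k with _ | p <;> simp only [cpt, hp] at h0
  · exact hk hp
  · exact one_ne_zero h0
  · exact one_ne_zero h0
  · rw [if_true, sub_eq_zero] at h0
    exact hk (by rw [hp, h0])

lemma exists_avoid (pts : Fin s → Option K) [Infinite K] :
    ∃ z : K, ∀ k, pts k ≠ some z := by
  have hT : ({z : K | some z ∈ Set.range pts}).Finite := by
    have : {z : K | some z ∈ Set.range pts} = some ⁻¹' (Set.range pts) := rfl
    rw [this]
    exact Set.Finite.preimage ((Option.some_injective K).injOn)
      (Set.finite_range _)
  obtain ⟨z, hz⟩ := hT.infinite_compl.nonempty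
  exact ⟨z, fun k hk => hz ⟨k, hk⟩⟩

lemma Pm_inj {c : Fin s → ℕ → K} (hc : ∀ k, c k 0 ≠ 0) :
    Function.Injective (Pm m b c).mulVecLin := by
  rw [← LinearMap.ker_eq_bot]
  apply LinearMap.ker_eq_bot'.mpr
  intro v hv
  have rows : ∀ y : Ind m b, (Pm m b c).mulVec v y = 0 := fun y => congrFun hv y
  funext ⟨k, i, t⟩
  have main : ∀ jj (t : Fin (b k (i.1+1))), b k (i.1+1) - t.1 ≤ jj →
      v ⟨k, i, t⟩ = 0 := by
    intro jj
    induction jj with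
    | zero => intro t ht; exact absurd ht (by omega)
    | succ jj ih =>
      intro t ht
      have hrow := rows ⟨k, i, t⟩
      rw [Pm_mulVec] at hrow
      rw [Finset.sum_eq_single t] at hrow
      · rw [if_pos (le_refl _), Nat.sub_self] at hrow
        rcases mul_eq_zero.mp hrow with h | h
        · exact absurd h (hc k)
        · exact h
      · intro t' _ ht'
        by_cases hle : (t : ℕ) ≤ (t' : ℕ)
        · rw [if_pos hle, ih t' (by
            have : (t:ℕ) ≠ (t':ℕ) := fun hh => ht' (Fin.ext hh.symm)
            omega), mul_zero]
        · rw [if_neg hle]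
      · intro h; exact absurd (Finset.mem_univ t) h
  exact main (b k (i.1+1)) t (by omega)

section Embed
variable {m n : Fin s → ℕ} {b e : (k : Fin s) → ℕ → ℕ}
variable (hnm : ∀ k, n k ≤ m k)
variable (heb : ∀ k, ∀ j : ℕ, j < n k → e k (j + 1) ≤ b k (j + 1))

/-- The blockwise embedding of index types. -/
def emb (hnm : ∀ k, n k ≤ m k) (heb : ∀ k, ∀ j : ℕ, j < n k → e k (j+1) ≤ b k (j+1))
    (x : Ind n e) : Ind m b :=
  ⟨x.1, ⟨x.2.1.1, lt_of_lt_of_le x.2.1.2 (hnm x.1)⟩,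
    ⟨x.2.2.1, lt_of_lt_of_le x.2.2.2 (heb x.1 x.2.1.1 x.2.1.2)⟩⟩

lemma emb_inj : Function.Injective (emb (m := m) (b := b) hnm heb) := by
  rintro ⟨k, i, t⟩ ⟨k', j, u⟩ h
  obtain rfl : k = k' := congrArg Sigma.fst h
  have h2 : (i : ℕ) = (j : ℕ) := congrArg (fun z : Ind m b => (z.2.1 : ℕ)) h
  obtain rfl : i = j := Fin.ext h2
  have h3 : (t : ℕ) = (u : ℕ) := congrArg (fun z : Ind m b => (z.2.2 : ℕ)) h
  exact Sigma.ext rfl (heq_of_eq (Sigma.ext rfl (heq_of_eq (Fin.ext h3))))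

lemma emb_hit (x : Ind m b) (y : Ind n e) (h1 : x.1 = y.1)
    (h2 : (x.2.1 : ℕ) = (y.2.1 : ℕ)) (h3 : (x.2.2 : ℕ) < e x.1 ((y.2.1 : ℕ) + 1)) :
    ∃ z : Ind n e, x = emb hnm heb z := by
  refine ⟨⟨x.1, ⟨(x.2.1 : ℕ), by rw [h2, h1]; exact y.2.1.2⟩,
    ⟨(x.2.2 : ℕ), by
      show (x.2.2 : ℕ) < e x.1 ((x.2.1 : ℕ) + 1)
      have hcong : e x.1 (((x.2.1 : ℕ)) + 1) = e x.1 (((y.2.1 : ℕ)) + 1) := by rw [h2]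
      omega⟩⟩, ?_⟩
  exact Sigma.ext rfl (heq_of_eq (Sigma.ext (Fin.ext rfl) (heq_of_eq (Fin.ext rfl))))

/-- entries of the regular matrices agree along the embedding -/
lemma entries_agree (pts : Fin s → Option K) (z y : Ind n e) :
    RsumA K s pts m b (emb hnm heb z) (emb hnm heb y) = RsumA K s pts n e z y
    ∧ RsumB K s pts m b (emb hnm heb z) (emb hnm heb y) = RsumB K s pts n e z y := by
  constructor <;> rfl

lemma entries_miss_A (pts : Fin s → Option K) (x : Ind m b) (y : Ind n e)
    (hx : ∀ z : Ind n e, x ≠ emb hnm heb z) :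
    RsumA K s pts m b x (emb hnm heb y) = 0 := by
  simp only [RsumA]
  by_cases hc : x.1 = (emb hnm heb y).1 ∧ (x.2.1 : ℕ) = ((emb hnm heb y).2.1 : ℕ)
  · rw [if_pos hc]
    obtain ⟨h1, h2⟩ := hc
    rcases hp : pts x.1 with _ | p <;> simp only [hp]
    · -- ∞ block: J
      rw [if_neg]
      intro hval
      obtain ⟨z, hz⟩ := emb_hit hnm heb x y h1 h2 (by
        have h1' : x.1 = y.1 := h1
        have hyv : ((emb hnm heb y).2.2 : ℕ) = (y.2.2 : ℕ) := rfl
        have hyt : (y.2.2 : ℕ) < e y.1 ((y.2.1 : ℕ) + 1) := y.2.2.2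
        have hcong : e x.1 ((y.2.1 : ℕ) + 1) = e y.1 ((y.2.1 : ℕ) + 1) := by rw [h1']
        omega)
      exact hx z hz
    · rw [if_neg]
      intro hval
      obtain ⟨z, hz⟩ := emb_hit hnm heb x y h1 h2 (by
        have h1' : x.1 = y.1 := h1
        have hyv : ((emb hnm heb y).2.2 : ℕ) = (y.2.2 : ℕ) := rfl
        have hyt : (y.2.2 : ℕ) < e y.1 ((y.2.1 : ℕ) + 1) := y.2.2.2
        have hcong : e x.1 ((y.2.1 : ℕ) + 1) = e y.1 ((y.2.1 : ℕ) + 1) := by rw [h1']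
        omega)
      exact hx z hz
  · rw [if_neg hc]

lemma entries_miss_B (pts : Fin s → Option K) (x : Ind m b) (y : Ind n e)
    (hx : ∀ z : Ind n e, x ≠ emb hnm heb z) :
    RsumB K s pts m b x (emb hnm heb y) = 0 := by
  simp only [RsumB]
  by_cases hc : x.1 = (emb hnm heb y).1 ∧ (x.2.1 : ℕ) = ((emb hnm heb y).2.1 : ℕ)
  · rw [if_pos hc]
    obtain ⟨h1, h2⟩ := hc
    have hyv : ((emb hnm heb y).2.2 : ℕ) = (y.2.2 : ℕ) := rfl
    have hyt : (y.2.2 : ℕ) < e y.1 ((y.2.1 : ℕ) + 1) := y.2.2.2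
    have h1' : x.1 = y.1 := h1
    have hcong : e x.1 ((y.2.1 : ℕ) + 1) = e y.1 ((y.2.1 : ℕ) + 1) := by rw [h1']
    rcases hp : pts x.1 with _ | p <;> simp only [hp]
    · rw [if_neg]
      intro hval
      obtain ⟨z, hz⟩ := emb_hit hnm heb x y h1 h2 (by omega)
      exact hx z hz
    · rw [if_neg (show ¬((x.2.2 : ℕ) = ((emb hnm heb y).2.2 : ℕ)) from ?_),
        if_neg (show ¬(((emb hnm heb y).2.2 : ℕ) = (x.2.2 : ℕ) + 1) from ?_), add_zero]
      · intro hval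
        obtain ⟨z, hz⟩ := emb_hit hnm heb x y h1 h2 (by omega)
        exact hx z hz
      · intro hval
        obtain ⟨z, hz⟩ := emb_hit hnm heb x y h1 h2 (by omega)
        exact hx z hz
  · rw [if_neg hc]

variable [DecidableEq (Ind m b)] [DecidableEq (Ind n e)]

/-- inclusion matrix -/
def phiM (hnm : ∀ k, n k ≤ m k) (heb : ∀ k, ∀ j : ℕ, j < n k → e k (j+1) ≤ b k (j+1)) :
    Matrix (Ind m b) (Ind n e) K :=
  fun x y => if x = emb hnm heb y then 1 else 0

lemma phiM_inj : Function.Injective (phiM (K := K) hnm heb).mulVecLin := by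
  rw [← LinearMap.ker_eq_bot]
  apply LinearMap.ker_eq_bot'.mpr
  intro v hv
  funext y
  have h := congrFun hv (emb hnm heb y)
  show v y = 0
  rw [show (0 : Ind m b → K) (emb hnm heb y) = 0 from rfl] at h
  rw [← h]
  show _ = (phiM hnm heb).mulVec v (emb hnm heb y)
  rw [Matrix.mulVec, dotProduct, Finset.sum_eq_single y]
  · rw [phiM, if_pos rfl, one_mul]
  · intro z _ hz
    rw [phiM, if_neg (fun hh => hz (emb_inj hnm heb hh).symm), zero_mul]
  · intro h; exact absurd (Finset.mem_univ y) h

lemma mul_phiM_A (pts : Fin s → Option K) :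
    HMul.hMul (self := Matrix.instHMulOfFintypeOfMulOfAddCommMonoid) (RsumA K s pts m b) (phiM hnm heb)
      = HMul.hMul (self := Matrix.instHMulOfFintypeOfMulOfAddCommMonoid) (phiM hnm heb) (RsumA K s pts n e) := by
  refine Matrix.ext fun x y => ?_
  rw [Matrix.mul_apply, Matrix.mul_apply]
  rw [Finset.sum_eq_single (emb hnm heb y)]
  · rw [phiM, if_pos rfl, mul_one]
    by_cases hx : ∃ z : Ind n e, x = emb hnm heb z
    · obtain ⟨z, rfl⟩ := hx
      rw [Finset.sum_eq_single z]
      · rw [phiM, if_pos rfl, one_mul]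
        exact (entries_agree hnm heb pts z y).1
      · intro z' _ hz'
        rw [phiM, if_neg (fun hh => hz' (emb_inj hnm heb hh).symm), zero_mul]
      · intro h; exact absurd (Finset.mem_univ z) h
    · push_neg at hx
      rw [Finset.sum_eq_zero, entries_miss_A hnm heb pts x y hx]
      intro z _
      rw [phiM, if_neg (hx z), zero_mul]
  · intro z _ hz
    rw [phiM, if_neg hz, mul_zero]
  · intro h; exact absurd (Finset.mem_univ _) h

lemma mul_phiM_B (pts : Fin s → Option K) :
    HMul.hMul (self := Matrix.instHMulOfFintypeOfMulOfAddCommMonoid) (RsumB K s pts m b) (phiM hnm heb)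
      = HMul.hMul (self := Matrix.instHMulOfFintypeOfMulOfAddCommMonoid) (phiM hnm heb) (RsumB K s pts n e) := by
  refine Matrix.ext fun x y => ?_
  rw [Matrix.mul_apply, Matrix.mul_apply]
  rw [Finset.sum_eq_single (emb hnm heb y)]
  · rw [phiM, if_pos rfl, mul_one]
    by_cases hx : ∃ z : Ind n e, x = emb hnm heb z
    · obtain ⟨z, rfl⟩ := hx
      rw [Finset.sum_eq_single z]
      · rw [phiM, if_pos rfl, one_mul]
        exact (entries_agree hnm heb pts z y).2
      · intro z' _ hz'
        rw [phiM, if_neg (fun hh => hz' (emb_inj hnm heb hh).symm), zero_mul]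
      · intro h; exact absurd (Finset.mem_univ z) h
    · push_neg at hx
      rw [Finset.sum_eq_zero, entries_miss_B hnm heb pts x y hx]
      intro z _
      rw [phiM, if_neg (hx z), zero_mul]
  · intro z _ hz
    rw [phiM, if_neg hz, mul_zero]
  · intro h; exact absurd (Finset.mem_univ _) h
end Embed

end RegKron

/-- Theorem 11: the regular Kronecker representation
`N^R = ⊕_k ⊕_{j=1}^{n k} R_{pts k, e k j}` is a subrepresentation of
`M^R = ⊕_k ⊕_{i=1}^{m k} R_{pts k, b k i}` iff for every point `k`, `m k ≥ n k`
and `b k i ≥ e k i` for `1 ≤ i ≤ n k`.  The distinct points `pts k` run over a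
finite list of elements of `ℙ¹(K) = Option K`. -/
theorem regular_subrep_iff (K : Type*) [Field K] [IsAlgClosed K]
    (s : ℕ) (pts : Fin s → Option K) (hpts : Function.Injective pts)
    (m n : Fin s → ℕ) (b e : (k : Fin s) → ℕ → ℕ)
    (hb_pos : ∀ k, ∀ i, 1 ≤ i → i ≤ m k → 1 ≤ b k i)
    (hb_mono : ∀ k, ∀ i j, 1 ≤ i → i ≤ j → j ≤ m k → b k j ≤ b k i)
    (he_pos : ∀ k, ∀ i, 1 ≤ i → i ≤ n k → 1 ≤ e k i)
    (he_mono : ∀ k, ∀ i j, 1 ≤ i → i ≤ j → j ≤ n k → e k j ≤ e k i) :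
    (∃ (ψ : Matrix (Σ k : Fin s, Σ i : Fin (m k), Fin (b k (i.1 + 1)))
          (Σ k : Fin s, Σ j : Fin (n k), Fin (e k (j.1 + 1))) K)
       (φ : Matrix (Σ k : Fin s, Σ i : Fin (m k), Fin (b k (i.1 + 1)))
          (Σ k : Fin s, Σ j : Fin (n k), Fin (e k (j.1 + 1))) K),
        Function.Injective ψ.mulVecLin ∧ Function.Injective φ.mulVecLin ∧
        RsumA K s pts m b * φ = ψ * RsumA K s pts n e ∧
        RsumB K s pts m b * φ = ψ * RsumB K s pts n e) ↔
    (∀ k, n k ≤ m k ∧ ∀ i, 1 ≤ i → i ≤ n k → e k i ≤ b k i) := by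
  classical
  constructor
  · rintro ⟨ψ, φ, hψ, hφ, hA, hB⟩
    intro k
    obtain ⟨z, hz⟩ := RegKron.exists_avoid pts
    have hC : ∀ q' : Option K, RegKron.Pm m b (RegKron.cpt pts q') * φ
        = ψ * RegKron.Pm n e (RegKron.cpt pts q') := by
      intro q'
      rcases q' with _ | w
      · rw [RegKron.Pm_cpt_none, RegKron.Pm_cpt_none]; exact hA
      · rw [RegKron.Pm_cpt_some, RegKron.Pm_cpt_some, Matrix.sub_mul, Matrix.mul_sub, hB,
          Matrix.smul_mul, Matrix.mul_smul, hA]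
    set q := pts k with hq
    set cM := (RegKron.Pm m b (RegKron.cpt pts q)).mulVecLin with hcM
    set cN := (RegKron.Pm n e (RegKron.cpt pts q)).mulVecLin with hcN
    set dM := (RegKron.Pm m b (RegKron.cpt pts (some z))).mulVecLin with hdM
    set dN := (RegKron.Pm n e (RegKron.cpt pts (some z))).mulVecLin with hdN
    set Φ := φ.mulVecLin with hΦdef
    set Ψ := ψ.mulVecLin with hΨdef
    have hdMinj : Function.Injective dM :=
      RegKron.Pm_inj (fun k' => RegKron.cpt_nz pts (hz k'))
    have hdNinj : Function.Injective dN :=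
      RegKron.Pm_inj (fun k' => RegKron.cpt_nz pts (hz k'))
    have hdMbij : Function.Bijective dM :=
      ⟨hdMinj, (LinearMap.injective_iff_surjective).mp hdMinj⟩
    have hdNbij : Function.Bijective dN :=
      ⟨hdNinj, (LinearMap.injective_iff_surjective).mp hdNinj⟩
    have hcommM : ∀ v, cM (dM v) = dM (cM v) := by
      have hmatcomm := congrArg Matrix.mulVecLin
        (RegKron.Pm_commute (m := m) (b := b) (RegKron.cpt pts q) (RegKron.cpt pts (some z)))
      rw [Matrix.mulVecLin_mul, Matrix.mulVecLin_mul] at hmatcomm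
      exact fun v => LinearMap.congr_fun hmatcomm v
    have hcommN : ∀ v, cN (dN v) = dN (cN v) := by
      have hmatcomm := congrArg Matrix.mulVecLin
        (RegKron.Pm_commute (m := n) (b := e) (RegKron.cpt pts q) (RegKron.cpt pts (some z)))
      rw [Matrix.mulVecLin_mul, Matrix.mulVecLin_mul] at hmatcomm
      exact fun v => LinearMap.congr_fun hmatcomm v
    set fM := (LinearEquiv.ofBijective dM hdMbij).symm.toLinearMap ∘ₗ cM with hfM
    set fN := (LinearEquiv.ofBijective dN hdNbij).symm.toLinearMap ∘ₗ cN with hfN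
    have hDfun : ∀ v, dM (Φ v) = Ψ (dN v) := by
      intro v
      have hmat := congrArg Matrix.mulVecLin (hC (some z))
      rw [Matrix.mulVecLin_mul, Matrix.mulVecLin_mul] at hmat
      exact LinearMap.congr_fun hmat v
    have hCfun : ∀ v, cM (Φ v) = Ψ (cN v) := by
      intro v
      have hmat := congrArg Matrix.mulVecLin (hC q)
      rw [Matrix.mulVecLin_mul, Matrix.mulVecLin_mul] at hmat
      exact LinearMap.congr_fun hmat v
    have hmix : ∀ u, (LinearEquiv.ofBijective dM hdMbij).symm (Ψ u)
        = Φ ((LinearEquiv.ofBijective dN hdNbij).symm u) := by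
      intro u
      have h1 : dM (Φ ((LinearEquiv.ofBijective dN hdNbij).symm u))
          = Ψ (dN ((LinearEquiv.ofBijective dN hdNbij).symm u)) := hDfun _
      have h2 : dN ((LinearEquiv.ofBijective dN hdNbij).symm u) = u :=
        (LinearEquiv.ofBijective dN hdNbij).apply_symm_apply u
      rw [h2] at h1
      have h3 := congrArg (LinearEquiv.ofBijective dM hdMbij).symm h1
      rw [show (LinearEquiv.ofBijective dM hdMbij).symm
          (dM (Φ ((LinearEquiv.ofBijective dN hdNbij).symm u)))
          = Φ ((LinearEquiv.ofBijective dN hdNbij).symm u) from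
        (LinearEquiv.ofBijective dM hdMbij).symm_apply_apply _] at h3
      exact h3.symm
    have hint : ∀ v, fM (Φ v) = Φ (fN v) := by
      intro v
      show (LinearEquiv.ofBijective dM hdMbij).symm (cM (Φ v))
        = Φ ((LinearEquiv.ofBijective dN hdNbij).symm (cN v))
      rw [hCfun v, hmix (cN v)]
    have hkerM : LinearMap.ker fM = LinearMap.ker cM := by
      ext v
      simp only [LinearMap.mem_ker, hfM, LinearMap.comp_apply, LinearEquiv.coe_coe]
      constructor
      · intro hv
        have := congrArg (LinearEquiv.ofBijective dM hdMbij) hv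
        rw [LinearEquiv.apply_symm_apply, map_zero] at this
        exact this
      · intro hv; rw [hv, map_zero]
    have hkerN : LinearMap.ker fN = LinearMap.ker cN := by
      ext v
      simp only [LinearMap.mem_ker, hfN, LinearMap.comp_apply, LinearEquiv.coe_coe]
      constructor
      · intro hv
        have := congrArg (LinearEquiv.ofBijective dN hdNbij) hv
        rw [LinearEquiv.apply_symm_apply, map_zero] at this
        exact this
      · intro hv; rw [hv, map_zero]
    have key : ∀ i : ℕ,
        Module.finrank K (LinearMap.ker cN ⊓ LinearMap.range (cN ^ i) :
          Submodule K ((Σ k : Fin s, Σ j : Fin (n k), Fin (e k (j.1 + 1))) → K))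
        ≤ Module.finrank K (LinearMap.ker cM ⊓ LinearMap.range (cM ^ i) :
          Submodule K ((Σ k : Fin s, Σ i : Fin (m k), Fin (b k (i.1 + 1))) → K)) := by
      intro i
      calc Module.finrank K (LinearMap.ker cN ⊓ LinearMap.range (cN ^ i) : Submodule K _)
          = Module.finrank K (LinearMap.ker cN ⊓ LinearMap.range (fN ^ i) : Submodule K _) := by
            rw [hfN]
            exact (RegKron.finrank_ker_inf_range_twist cN dN hdNbij hcommN i).symm
        _ = Module.finrank K (LinearMap.ker fN ⊓ LinearMap.range (fN ^ i) : Submodule K _) := by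
            rw [hkerN]
        _ ≤ Module.finrank K (LinearMap.ker fM ⊓ LinearMap.range (fM ^ i) : Submodule K _) :=
            RegKron.finrank_ker_inf_range_le Φ hφ fM fN hint i
        _ = Module.finrank K (LinearMap.ker cM ⊓ LinearMap.range (fM ^ i) : Submodule K _) := by
            rw [hkerM]
        _ = Module.finrank K (LinearMap.ker cM ⊓ LinearMap.range (cM ^ i) : Submodule K _) := by
            rw [hfM]
            exact RegKron.finrank_ker_inf_range_twist cM dM hdMbij hcommM i
    have hqq : pts k = q := hq.symm
    have hnzM : ∀ k', k' ≠ k → RegKron.cpt pts q k' 0 ≠ 0 := fun k' hk' =>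
      RegKron.cpt_nz pts (fun hpk => hk' (hpts (hpk.trans hqq.symm)))
    have hvalM : ∀ i : ℕ,
        Module.finrank K (LinearMap.ker cM ⊓ LinearMap.range (cM ^ i) : Submodule K _)
        = (Finset.univ.filter (fun i' : Fin (m k) => i < b k (i'.1 + 1))).card := by
      intro i
      have h1 : cM ^ i = (RegKron.Pm m b (RegKron.cpow (RegKron.cpt pts q) i)).mulVecLin := by
        rw [← RegKron.Pm_pow, RegKron.mulVecLin_matrix_pow, hcM]
      rw [h1, hcM, RegKron.ker_inf_range_eq (RegKron.cpt_special0 pts hqq)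
        (RegKron.cpt_special1 pts hqq) (fun k' d hd => RegKron.cpt_deg2 pts q k' d hd)
        hnzM i, RegKron.finrank_Uo, RegKron.card_SS]
    have hvalN : ∀ i : ℕ,
        Module.finrank K (LinearMap.ker cN ⊓ LinearMap.range (cN ^ i) : Submodule K _)
        = (Finset.univ.filter (fun j : Fin (n k) => i < e k (j.1 + 1))).card := by
      intro i
      have h1 : cN ^ i = (RegKron.Pm n e (RegKron.cpow (RegKron.cpt pts q) i)).mulVecLin := by
        rw [← RegKron.Pm_pow, RegKron.mulVecLin_matrix_pow, hcN]
      rw [h1, hcN, RegKron.ker_inf_range_eq (RegKron.cpt_special0 pts hqq)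
        (RegKron.cpt_special1 pts hqq) (fun k' d hd => RegKron.cpt_deg2 pts q k' d hd)
        hnzM i, RegKron.finrank_Uo, RegKron.card_SS]
    have hcard : ∀ i : ℕ,
        (Finset.univ.filter (fun j : Fin (n k) => i < e k (j.1 + 1))).card
        ≤ (Finset.univ.filter (fun i' : Fin (m k) => i < b k (i'.1 + 1))).card := by
      intro i
      rw [← hvalM i, ← hvalN i]
      exact key i
    constructor
    · -- n k ≤ m k
      have h0 := hcard 0
      have hfull : (Finset.univ.filter (fun j : Fin (n k) => 0 < e k (j.1 + 1)))
          = Finset.univ := by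
        apply Finset.filter_true_of_mem
        intro j _
        exact lt_of_lt_of_le Nat.zero_lt_one (he_pos k (j.1+1) (by omega) (by omega))
      rw [hfull, Finset.card_univ, Fintype.card_fin] at h0
      calc n k ≤ (Finset.univ.filter (fun i' : Fin (m k) => 0 < b k (i'.1 + 1))).card := h0
        _ ≤ Finset.univ.card := Finset.card_filter_le _ _
        _ = m k := by rw [Finset.card_univ, Fintype.card_fin]
    · intro i0 hi1 hin
      by_contra hlt
      push_neg at hlt
      have hcard' := hcard (b k i0)
      have hle : i0 ≤ (Finset.univ.filter
          (fun j : Fin (n k) => b k i0 < e k (j.1 + 1))).card := by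
        have : (Finset.range i0).card ≤ (Finset.univ.filter
            (fun j : Fin (n k) => b k i0 < e k (j.1 + 1))).card := by
          apply Finset.card_le_card_of_injOn (fun a => ⟨a % n k, Nat.mod_lt _ (by omega)⟩)
          · intro a ha
            have ha' : a < i0 := by simpa using ha
            have hmod : a % n k = a := Nat.mod_eq_of_lt (by omega)
            rw [Finset.mem_coe, Finset.mem_filter]
            refine ⟨Finset.mem_univ _, ?_⟩
            show b k i0 < e k (a % n k + 1)
            have hmono := he_mono k (a % n k + 1) i0 (by omega) (by omega) hin
            omega
          · intro a1 h1 a2 h2 hf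
            have h1' : a1 < i0 := by simpa using h1
            have h2' : a2 < i0 := by simpa using h2
            have hv : a1 % n k = a2 % n k := congrArg Fin.val hf
            rw [Nat.mod_eq_of_lt (by omega), Nat.mod_eq_of_lt (by omega)] at hv
            exact hv
        rw [Finset.card_range] at this
        exact this
      have hge : (Finset.univ.filter
          (fun i' : Fin (m k) => b k i0 < b k (i'.1 + 1))).card ≤ i0 - 1 := by
        have hsub : (Finset.univ.filter
            (fun i' : Fin (m k) => b k i0 < b k (i'.1 + 1))).card
            ≤ (Finset.range (i0 - 1)).card := by
          apply Finset.card_le_card_of_injOn (fun j => j.1)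
          · intro j hj
            rw [Finset.mem_coe, Finset.mem_filter] at hj
            simp only [Finset.mem_coe, Finset.mem_range]
            by_contra hge'
            push_neg at hge'
            have hj2 := hj.2
            have hmono := hb_mono k i0 (j.1 + 1) hi1 (by omega) (by omega)
            omega
          · intro a1 h1 a2 h2 hf
            have h1' : a1 ∈ Finset.univ.filter (fun i' : Fin (m k) => b k i0 < b k (i'.1 + 1)) := by
              simpa using h1
            exact Fin.ext hf
        rw [Finset.card_range] at hsub
        exact hsub
      omega
  · intro h
    have hnm : ∀ k, n k ≤ m k := fun k => (h k).1
    have heb : ∀ k, ∀ j : ℕ, j < n k → e k (j + 1) ≤ b k (j + 1) :=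
      fun k j hj => (h k).2 (j + 1) (by omega) (by omega)
    exact ⟨RegKron.phiM hnm heb, RegKron.phiM hnm heb,
      RegKron.phiM_inj hnm heb, RegKron.phiM_inj hnm heb,
      RegKron.mul_phiM_A hnm heb pts, RegKron.mul_phiM_B hnm heb pts⟩
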